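/- Let {m_n}_{n=1}^∞ ⊂ ℤ be a sequence whose set of values contains 0 and is symmetric ({m_n} = {−m_n}), set θ_n := m_n/n and Θ := {θ_n : n ≥ 1}. Then: (i) if θ_{n_1} + … + θ_{n_k} ≠ 0 for indices n_1,…,n_k, then |θ_{n_1}+…+θ_{n_k}| ≥ 1/(n_1 n_2 ⋯ n_k); (ii) if w : Θ → [0,∞) is a weight such that for every N ≥ 0 there is C_N > 0 with w(θ_n) ≤ C_N ⟨max(n, |m_n|/n)⟩^{−N} for all n ≥ 1, then for every k ≥ 0 the sum over all tuples (n_1,…,n_k) of s_k((θ_{n_1},…,θ_{n_k})), computed with the weight w, is finite. -/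

import Mathlib

open scoped BigOperators

/-- Japanese bracket `⟨t⟩ = (1+t²)^{1/2}`. -/
noncomputable def jap (t : ℝ) : ℝ := Real.sqrt (1 + t ^ 2)

/-- The recursively defined quantities `s_k` associated to a weight `w`.
`sW w k θ` is `s_k(θ)` where `θ ∈ ℝ^k`. -/
noncomputable def sW (w : ℝ → ℝ) : (k : ℕ) → (Fin k → ℝ) → ℝ
  | 0, _ => 1
  | 1, θ => if θ 0 = 0 then 0 else w (θ 0) / |θ 0|
  | (k+2), θ =>
    if (∑ i, θ i) = 0 then 0
    else |∑ i, θ i|⁻¹ *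
      ∑ p : Equiv.Perm (Fin (k+2)), ∑ c : Composition (k+2),
        if h : ∀ i : Fin c.length, 2 * c.blocksFun i ≤ k + 2 then
          ∏ i : Fin c.length, sW w (c.blocksFun i) (fun j => θ (p (c.embedding i j)))
        else 0
termination_by k => k
decreasing_by
  have := h i; omega

lemma keylem (m : ℕ+ → ℤ) (k : ℕ) (n : Fin k → ℕ+)
    (hS : (∑ i, (m (n i) : ℝ) / (n i : ℕ)) ≠ 0) :
    1 / (∏ i, ((n i : ℕ) : ℝ)) ≤ |∑ i, (m (n i) : ℝ) / (n i : ℕ)| := by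
  set S : ℝ := ∑ i, (m (n i) : ℝ) / (n i : ℕ) with hSdef
  have hP : (0:ℝ) < ∏ i, ((n i : ℕ) : ℝ) := by
    apply Finset.prod_pos; intro i _; exact_mod_cast (n i).pos
  set P : ℝ := ∏ i, ((n i : ℕ) : ℝ) with hPdef
  set z : ℤ := ∑ i, m (n i) * ∏ j ∈ Finset.univ.erase i, ((n j : ℕ) : ℤ) with hz
  have hzr : (z : ℝ) = P * S := by
    rw [hz, hSdef, hPdef]
    push_cast
    rw [Finset.mul_sum]
    refine Finset.sum_congr rfl fun i _ => ?_
    have hni : ((n i : ℕ) : ℝ) ≠ 0 := by exact_mod_cast (n i).pos.ne'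
    rw [← Finset.mul_prod_erase _ _ (Finset.mem_univ i)]
    field_simp
  have hz0 : z ≠ 0 := by
    intro h; rw [h] at hzr; simp at hzr
    rcases hzr with h1 | h2
    · exact hP.ne' h1
    · exact hS h2
  have h1 : (1:ℝ) ≤ |(z:ℝ)| := by
    rw [← Int.cast_abs]; exact_mod_cast Int.one_le_abs hz0
  rw [hzr, abs_mul, abs_of_pos hP] at h1
  rw [div_le_iff₀ hP]
  linarith [h1]

lemma sW_nonneg (w : ℝ → ℝ) (hw : ∀ t, 0 ≤ w t) : ∀ k (θ : Fin k → ℝ), 0 ≤ sW w k θ := by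
  intro k
  induction k using Nat.strong_induction_on with
  | _ k ih =>
    match k with
    | 0 => intro θ; rw [sW]; norm_num
    | 1 =>
      intro θ; rw [sW]
      split
      · exact le_refl _
      · exact div_nonneg (hw _) (abs_nonneg _)
    | (k+2) =>
      intro θ; rw [sW]
      split
      · exact le_refl _
      · refine mul_nonneg (inv_nonneg.2 (abs_nonneg _)) ?_
        refine Finset.sum_nonneg fun p _ => Finset.sum_nonneg fun c _ => ?_
        split
        case isTrue h =>
          refine Finset.prod_nonneg fun i _ => ?_
          exact ih (c.blocksFun i) (by have := h i; omega) _
        case isFalse => exact le_refl _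

lemma jap_bound (n : ℕ+) (t : ℝ) (M : ℕ) :
    jap (max ((n : ℕ) : ℝ) t) ^ (-(M : ℝ)) ≤ ((((n : ℕ)) : ℝ) ^ M)⁻¹ := by
  have hn : (0:ℝ) < ((n : ℕ) : ℝ) := by exact_mod_cast n.pos
  have hj : ((n : ℕ) : ℝ) ≤ jap (max ((n : ℕ) : ℝ) t) := by
    refine le_trans (le_max_left _ t) ?_
    set s := max ((n : ℕ) : ℝ) t
    have : s ≤ |s| := le_abs_self s
    calc s ≤ |s| := le_abs_self s
      _ = Real.sqrt (s ^ 2) := (Real.sqrt_sq_eq_abs s).symm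
      _ ≤ Real.sqrt (1 + s ^ 2) := Real.sqrt_le_sqrt (by linarith)
  calc jap (max ((n : ℕ) : ℝ) t) ^ (-(M : ℝ)) ≤ (((n : ℕ) : ℝ)) ^ (-(M : ℝ)) :=
        Real.rpow_le_rpow_of_nonpos hn hj (by simp)
    _ = ((((n : ℕ)) : ℝ) ^ M)⁻¹ := by
        rw [Real.rpow_neg hn.le, Real.rpow_natCast]

lemma sW_bound (m : ℕ+ → ℤ) (w : ℝ → ℝ) (hw0 : ∀ t, 0 ≤ w t)
    (hw : ∀ N : ℕ, ∃ C : ℝ, 0 < C ∧ ∀ n : ℕ+,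
        w ((m n : ℝ) / (n : ℕ)) ≤
          C * jap (max ((n : ℕ) : ℝ) (|(m n : ℝ)| / (n : ℕ))) ^ (-(N : ℝ))) :
    ∀ k N : ℕ, ∃ C : ℝ, 0 < C ∧ ∀ n : Fin k → ℕ+,
      sW w k (fun i => (m (n i) : ℝ) / (n i : ℕ)) ≤ C * ∏ i, ((((n i : ℕ)) : ℝ) ^ N)⁻¹ := by
  intro k
  induction k using Nat.strong_induction_on with
  | _ k ih =>
    match k with
    | 0 =>
      intro N
      exact ⟨1, one_pos, fun n => by rw [sW]; simp⟩
    | 1 =>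
      intro N
      obtain ⟨C, hC, hCb⟩ := hw (N+1)
      refine ⟨C, hC, fun n => ?_⟩
      have hn : (0:ℝ) < ((n 0 : ℕ) : ℝ) := by exact_mod_cast (n 0).pos
      rw [sW]
      split
      · have : (0:ℝ) ≤ C * ∏ i, ((((n i : ℕ)) : ℝ) ^ N)⁻¹ := by
          refine mul_nonneg hC.le (Finset.prod_nonneg fun i _ => ?_)
          positivity
        exact this
      case isFalse hθ =>
        have hm : m (n 0) ≠ 0 := by
          intro h; apply hθ; simp [h]
        have hm1 : (1:ℝ) ≤ |(m (n 0) : ℝ)| := by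
          rw [← Int.cast_abs]; exact_mod_cast Int.one_le_abs hm
        have habs : ((n 0 : ℕ) : ℝ)⁻¹ ≤ |(m (n 0) : ℝ) / ((n 0 : ℕ) : ℝ)| := by
          rw [abs_div, abs_of_pos hn, inv_eq_one_div, div_le_div_iff₀ hn hn]
          nlinarith
        have habspos : (0:ℝ) < |(m (n 0) : ℝ) / ((n 0 : ℕ) : ℝ)| := by
          positivity
        have hinv : |(m (n 0) : ℝ) / ((n 0 : ℕ) : ℝ)|⁻¹ ≤ ((n 0 : ℕ) : ℝ) := by
          calc |(m (n 0) : ℝ) / ((n 0 : ℕ) : ℝ)|⁻¹ ≤ (((n 0 : ℕ) : ℝ)⁻¹)⁻¹ :=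
                inv_anti₀ (by positivity) habs
            _ = ((n 0 : ℕ) : ℝ) := inv_inv _
        have hwb : w ((m (n 0) : ℝ) / ((n 0 : ℕ) : ℝ)) ≤ C * (((n 0 : ℕ) : ℝ) ^ (N+1))⁻¹ := by
          calc w ((m (n 0) : ℝ) / ((n 0 : ℕ) : ℝ))
              ≤ C * jap (max ((n 0 : ℕ) : ℝ) (|(m (n 0) : ℝ)| / ((n 0 : ℕ) : ℝ))) ^ (-((N+1 : ℕ) : ℝ)) :=
                hCb (n 0)
            _ ≤ C * (((n 0 : ℕ) : ℝ) ^ (N+1))⁻¹ := by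
                exact mul_le_mul_of_nonneg_left (jap_bound (n 0) _ (N+1)) hC.le
        calc w ((m (n 0) : ℝ) / ((n 0 : ℕ) : ℝ)) / |(m (n 0) : ℝ) / ((n 0 : ℕ) : ℝ)|
            = w ((m (n 0) : ℝ) / ((n 0 : ℕ) : ℝ)) * |(m (n 0) : ℝ) / ((n 0 : ℕ) : ℝ)|⁻¹ := by
              rw [div_eq_mul_inv]
          _ ≤ (C * (((n 0 : ℕ) : ℝ) ^ (N+1))⁻¹) * ((n 0 : ℕ) : ℝ) := by
              refine mul_le_mul hwb hinv (by positivity) (by positivity)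
          _ = C * (((n 0 : ℕ) : ℝ) ^ N)⁻¹ := by
              rw [pow_succ]
              field_simp
          _ = C * ∏ i, ((((n i : ℕ)) : ℝ) ^ N)⁻¹ := by
              rw [Fin.prod_univ_one]
    | (k+2) =>
      intro N
      -- constants from induction hypothesis
      have hb : ∀ b : Fin (k+2), ∃ C : ℝ, 0 < C ∧ ∀ nn : Fin (b : ℕ) → ℕ+,
          sW w b (fun i => (m (nn i) : ℝ) / (nn i : ℕ)) ≤
            C * ∏ i, ((((nn i : ℕ)) : ℝ) ^ (N+1))⁻¹ :=
        fun b => ih b b.isLt (N+1)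
      choose C' hC'pos hC'bd using hb
      set D : ℝ := ∑ b : Fin (k+2), C' b with hD
      have hDpos : 0 < D :=
        Finset.sum_pos (fun b _ => hC'pos b) Finset.univ_nonempty
      have hDle : ∀ b, C' b ≤ D :=
        fun b => Finset.single_le_sum (fun i _ => (hC'pos i).le) (Finset.mem_univ b)
      set E : ℝ := (max D 1) ^ (k+2) with hE
      have hE1 : (1:ℝ) ≤ max D 1 := le_max_right _ _
      have hEpos : 0 < E := by positivity
      set K : ℝ := ((Fintype.card (Equiv.Perm (Fin (k+2))) *
        Fintype.card (Composition (k+2)) : ℕ) : ℝ) with hK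
      have hKpos : (0:ℝ) < K := by
        have h1 : 0 < Fintype.card (Equiv.Perm (Fin (k+2))) := Fintype.card_pos
        have h2 : 0 < Fintype.card (Composition (k+2)) := Fintype.card_pos
        positivity
      refine ⟨K * E, by positivity, fun n => ?_⟩
      rw [sW]
      split
      · exact mul_nonneg (by positivity) (Finset.prod_nonneg fun i _ => by positivity)
      case isFalse hS =>
        have hP : (0:ℝ) < ∏ i, ((n i : ℕ) : ℝ) := by
          apply Finset.prod_pos; intro i _; exact_mod_cast (n i).pos
        set P : ℝ := ∏ i, ((n i : ℕ) : ℝ) with hPdef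
        set Q : ℝ := ∏ a, ((((n a : ℕ)) : ℝ) ^ (N+1))⁻¹ with hQdef
        have hQpos : (0:ℝ) < Q := by
          apply Finset.prod_pos; intro i _
          have : (0:ℝ) < ((n i : ℕ) : ℝ) := by exact_mod_cast (n i).pos
          positivity
        have hinv : |∑ i, (m (n i) : ℝ) / (n i : ℕ)|⁻¹ ≤ P := by
          have hkey := keylem m (k+2) n hS
          rw [one_div] at hkey
          calc |∑ i, (m (n i) : ℝ) / (n i : ℕ)|⁻¹ ≤ (P⁻¹)⁻¹ :=
                inv_anti₀ (by positivity) hkey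
            _ = P := inv_inv _
        -- bound each term
        have hterm : ∀ (p : Equiv.Perm (Fin (k+2))) (c : Composition (k+2)),
            (if h : ∀ i : Fin c.length, 2 * c.blocksFun i ≤ k + 2 then
              ∏ i : Fin c.length, sW w (c.blocksFun i)
                (fun j => (fun i => (m (n i) : ℝ) / (n i : ℕ)) (p (c.embedding i j)))
            else 0) ≤ E * Q := by
          intro p c
          split
          case isFalse => positivity
          case isTrue h =>
            have hprod : ∏ i : Fin c.length, ∏ j : Fin (c.blocksFun i),
                ((((n (p (c.embedding i j)) : ℕ)) : ℝ) ^ (N+1))⁻¹ = Q := by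
              rw [Finset.prod_sigma' Finset.univ
                (fun _ => Finset.univ)
                (fun i j => ((((n (p (c.embedding i j)) : ℕ)) : ℝ) ^ (N+1))⁻¹),
                Finset.univ_sigma_univ, hQdef]
              exact Fintype.prod_equiv (c.blocksFinEquiv.trans p)
                (fun x => ((((n (p (c.embedding x.1 x.2)) : ℕ)) : ℝ) ^ (N+1))⁻¹)
                (fun a => ((((n a : ℕ)) : ℝ) ^ (N+1))⁻¹)
                (fun x => rfl)
            calc ∏ i : Fin c.length, sW w (c.blocksFun i)
                  (fun j => (fun i => (m (n i) : ℝ) / (n i : ℕ)) (p (c.embedding i j)))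
                ≤ ∏ i : Fin c.length, (D * ∏ j : Fin (c.blocksFun i),
                    ((((n (p (c.embedding i j)) : ℕ)) : ℝ) ^ (N+1))⁻¹) := by
                  refine Finset.prod_le_prod (fun i _ => sW_nonneg w hw0 _ _) (fun i _ => ?_)
                  have hlt : c.blocksFun i < k + 2 := by have := h i; omega
                  have hbd := hC'bd ⟨c.blocksFun i, hlt⟩
                    (fun j => n (p (c.embedding i j)))
                  refine le_trans hbd ?_
                  refine mul_le_mul_of_nonneg_right (hDle _) ?_
                  refine Finset.prod_nonneg fun j _ => ?_
                  positivity
              _ = D ^ c.length * ∏ i : Fin c.length, ∏ j : Fin (c.blocksFun i),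
                    ((((n (p (c.embedding i j)) : ℕ)) : ℝ) ^ (N+1))⁻¹ := by
                  rw [Finset.prod_mul_distrib, Finset.prod_const, Finset.card_univ,
                    Fintype.card_fin]
              _ ≤ E * Q := by
                  rw [hprod]
                  refine mul_le_mul_of_nonneg_right ?_ hQpos.le
                  calc D ^ c.length ≤ (max D 1) ^ c.length :=
                        pow_le_pow_left₀ hDpos.le (le_max_left _ _) _
                    _ ≤ (max D 1) ^ (k+2) :=
                        pow_le_pow_right₀ hE1 c.length_le
        have hsum : (∑ p : Equiv.Perm (Fin (k+2)), ∑ c : Composition (k+2),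
            if h : ∀ i : Fin c.length, 2 * c.blocksFun i ≤ k + 2 then
              ∏ i : Fin c.length, sW w (c.blocksFun i)
                (fun j => (fun i => (m (n i) : ℝ) / (n i : ℕ)) (p (c.embedding i j)))
            else 0) ≤ K * (E * Q) := by
          calc (∑ p : Equiv.Perm (Fin (k+2)), ∑ c : Composition (k+2),
              if h : ∀ i : Fin c.length, 2 * c.blocksFun i ≤ k + 2 then
                ∏ i : Fin c.length, sW w (c.blocksFun i)
                  (fun j => (fun i => (m (n i) : ℝ) / (n i : ℕ)) (p (c.embedding i j)))
              else 0)
              ≤ ∑ _p : Equiv.Perm (Fin (k+2)), ∑ _c : Composition (k+2), E * Q :=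
                Finset.sum_le_sum fun p _ => Finset.sum_le_sum fun c _ => hterm p c
            _ = K * (E * Q) := by
                simp only [Finset.sum_const, Finset.card_univ, smul_eq_mul, hK]
                push_cast
                ring
        have hsumnn : (0:ℝ) ≤ ∑ p : Equiv.Perm (Fin (k+2)), ∑ c : Composition (k+2),
            if h : ∀ i : Fin c.length, 2 * c.blocksFun i ≤ k + 2 then
              ∏ i : Fin c.length, sW w (c.blocksFun i)
                (fun j => (fun i => (m (n i) : ℝ) / (n i : ℕ)) (p (c.embedding i j)))
            else 0 := by
          refine Finset.sum_nonneg fun p _ => Finset.sum_nonneg fun c _ => ?_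
          split
          · exact Finset.prod_nonneg fun i _ => sW_nonneg w hw0 _ _
          · exact le_refl _
        have hPQ : P * Q = ∏ a, ((((n a : ℕ)) : ℝ) ^ N)⁻¹ := by
          rw [hPdef, hQdef, ← Finset.prod_mul_distrib]
          refine Finset.prod_congr rfl fun a _ => ?_
          have ha : ((n a : ℕ) : ℝ) ≠ 0 := by
            have : (0:ℝ) < ((n a : ℕ) : ℝ) := by exact_mod_cast (n a).pos
            exact this.ne'
          rw [pow_succ]
          field_simp
        calc |∑ i, (m (n i) : ℝ) / (n i : ℕ)|⁻¹ *
            (∑ p : Equiv.Perm (Fin (k+2)), ∑ c : Composition (k+2),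
              if h : ∀ i : Fin c.length, 2 * c.blocksFun i ≤ k + 2 then
                ∏ i : Fin c.length, sW w (c.blocksFun i)
                  (fun j => (fun i => (m (n i) : ℝ) / (n i : ℕ)) (p (c.embedding i j)))
              else 0)
            ≤ P * (K * (E * Q)) := by
              refine mul_le_mul hinv hsum hsumnn hP.le
          _ = (K * E) * (P * Q) := by ring
          _ = (K * E) * ∏ i, ((((n i : ℕ)) : ℝ) ^ N)⁻¹ := by rw [hPQ]

lemma base_summable : Summable (fun a : ℕ+ => ((((a : ℕ)) : ℝ) ^ 2)⁻¹) := by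
  have h1 : Summable (fun a : ℕ => (((a : ℝ)) ^ 2)⁻¹) := by
    simpa using (Real.summable_one_div_nat_pow).2 (by norm_num : 2 ≤ 2)
  exact h1.comp_injective (fun a b h => PNat.coe_injective h)

lemma summable_aux : ∀ k : ℕ, Summable (fun n : Fin k → ℕ+ => ∏ i, ((((n i : ℕ)) : ℝ) ^ 2)⁻¹) := by
  intro k
  induction k with
  | zero =>
    have : Finite (Fin 0 → ℕ+) := Finite.of_subsingleton
    exact Summable.of_finite
  | succ k ihk =>
    rw [← Equiv.summable_iff (Fin.consEquiv fun _ => ℕ+)]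
    have hf : 0 ≤ (fun a : ℕ+ => ((((a : ℕ)) : ℝ) ^ 2)⁻¹) := fun a => by positivity
    have hg : 0 ≤ (fun n : Fin k → ℕ+ => ∏ i, ((((n i : ℕ)) : ℝ) ^ 2)⁻¹) :=
      fun n => Finset.prod_nonneg fun i _ => by positivity
    have h2 := Summable.mul_of_nonneg (f := fun a : ℕ+ => ((((a : ℕ)) : ℝ) ^ 2)⁻¹)
      (g := fun n : Fin k → ℕ+ => ∏ i, ((((n i : ℕ)) : ℝ) ^ 2)⁻¹) base_summable ihk hf hg
    refine h2.congr fun x => ?_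
    simp only [Function.comp_apply, Fin.consEquiv_apply]
    rw [Fin.prod_univ_succ]
    simp

theorem stmt7 (m : ℕ+ → ℤ)
    (h0 : ∃ n : ℕ+, m n = 0) (hsym : ∀ n : ℕ+, ∃ n' : ℕ+, m n' = -m n) :
    -- (i) lower bound on nonzero sums
    (∀ (k : ℕ) (n : Fin k → ℕ+),
      (∑ i, (m (n i) : ℝ) / (n i : ℕ)) ≠ 0 →
      1 / (∏ i, ((n i : ℕ) : ℝ)) ≤ |∑ i, (m (n i) : ℝ) / (n i : ℕ)|) ∧
    -- (ii) summability for rapidly decaying weights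
    (∀ w : ℝ → ℝ, (∀ t, 0 ≤ w t) →
      (∀ N : ℕ, ∃ C : ℝ, 0 < C ∧ ∀ n : ℕ+,
        w ((m n : ℝ) / (n : ℕ)) ≤
          C * jap (max ((n : ℕ) : ℝ) (|(m n : ℝ)| / (n : ℕ))) ^ (-(N : ℝ))) →
      ∀ k : ℕ, Summable (fun n : Fin k → ℕ+ =>
        sW w k (fun i => (m (n i) : ℝ) / (n i : ℕ)))) := by
  constructor
  · exact fun k n hS => keylem m k n hS
  · intro w hw0 hw k
    obtain ⟨C, hCpos, hC⟩ := sW_bound m w hw0 hw k 2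
    refine Summable.of_nonneg_of_le (fun n => sW_nonneg w hw0 k _) (fun n => hC n) ?_
    exact (summable_aux k).mul_left C
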